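/- Let S be a fusion set and ℤM the free fusion ring over S. For each word w ∈ M of length k there exist integers C^v_w for words v of length < k such that a_{s₁} ⋯ a_{s_k} = a_{s₁…s_k} + Σ_{|v| < k} C^v_{s₁…s_k} a_v. Consequently the set {a_{s₁} ⋯ a_{s_k} : k ∈ ℕ, sᵢ ∈ S} is ℤ-linearly independent in ℤM. -/

import Mathlib

/-- Conjugation of a word: reverse the word and conjugate each letter. -/
def wconj {S : Type*} (c : S → S) (w : List S) : List S :=
  (w.map c).reverse

/-- Fusion of two words: fuse last letter of `w` with first letter of `w'`. -/
def wfuse {S : Type*} (f : S → S → Option S) (w w' : List S) : Option (List S) :=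
  match w.getLast?, w'.head? with
  | some a, some b => (f a b).map (fun r => w.dropLast ++ r :: w'.tail)
  | _, _ => none

section Aux
variable {S : Type*} [DecidableEq S] (f : S → S → Option S) (c : S → S)
  {R : Type*} [Ring R] (b : Module.Basis (List S) ℤ R)
  (hmul : ∀ w w' : List S, (b w : R) * b w' =
      ∑ n ∈ Finset.range (min w.length w'.length + 1),
        if w'.take n = wconj c (w.drop (w.length - n)) then
          (b (w.take (w.length - n) ++ w'.drop n) +
            ((wfuse f (w.take (w.length - n)) (w'.drop n)).elim 0 (fun u => (b u : R))))
        else 0)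

include hmul

lemma single_mul_nil (s : S) : (b [s] : R) * b [] = b [s] := by
  rw [hmul]; simp [wconj, wfuse]

lemma single_mul_cons (s h : S) (t : List S) :
    (b [s] : R) * b (h :: t) = b (s :: h :: t) +
      (((f s h).elim 0 fun r => (b (r :: t) : R)) + (if h = c s then (b t : R) else 0)) := by
  rw [hmul]
  have h2 : min [s].length (h :: t).length + 1 = 2 := by simp
  rw [h2, Finset.sum_range_succ, Finset.sum_range_succ, Finset.sum_range_zero]
  simp only [List.length_cons, List.length_nil, zero_add]
  simp only [wconj, wfuse]
  simp only [List.take_zero, List.drop_zero, Nat.sub_zero, Nat.sub_self, List.drop_length,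
    List.map_nil, List.reverse_nil, if_true, List.take_length, List.nil_append]
  cases hf : f s h <;> simp [hf, List.getLast?_singleton, Option.elim] <;>
    by_cases hc : h = c s <;> simp [hc] <;> abel

/-- repr of the "error" of single multiplication is supported in lengths ≤ |v|. -/
lemma repr_single_mul (s : S) (v : List S) :
    ∀ u ∈ (b.repr ((b [s] : R) * b v - b (s :: v))).support, u.length ≤ v.length := by
  intro u hu
  cases v with
  | nil =>
    rw [single_mul_nil f c b hmul] at hu
    simp at hu
  | cons h t =>
    rw [single_mul_cons f c b hmul] at hu
    rw [add_sub_cancel_left] at hu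
    rw [map_add] at hu
    rcases Finset.mem_union.1 (Finsupp.support_add hu) with hu | hu
    · cases hf : f s h
      · simp [hf] at hu
      · rename_i r
        rw [hf] at hu
        simp only [Option.elim, Module.Basis.repr_self] at hu
        rw [Finsupp.support_single_ne_zero _ one_ne_zero] at hu
        simp at hu
        simp [hu]
    · by_cases hc : h = c s
      · simp only [if_pos hc, Module.Basis.repr_self] at hu
        rw [Finsupp.support_single_ne_zero _ one_ne_zero] at hu
        simp at hu
        simp [hu]
      · simp [if_neg hc] at hu

/-- multiplying a combination of short basis vectors by a single letter stays short. -/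
lemma mul_short (s : S) (k : ℕ) (l : List S →₀ ℤ) (hl : ∀ v ∈ l.support, v.length < k) :
    ∀ u ∈ (b.repr ((b [s] : R) * Finsupp.linearCombination ℤ (⇑b) l)).support,
      u.length ≤ k := by
  intro u hu
  rw [Finsupp.linearCombination_apply, Finsupp.sum, Finset.mul_sum] at hu
  rw [map_sum] at hu
  have := Finsupp.support_finset_sum hu
  rw [Finset.mem_biUnion] at this
  obtain ⟨v, hv, huv⟩ := this
  have hb : (b [s] : R) * l v • b v = l v • ((b [s] * b v - b (s :: v)) + b (s :: v)) := by
    rw [sub_add_cancel]; rw [mul_smul_comm]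
  rw [hb, map_smul] at huv
  have huv' := Finsupp.support_smul huv
  rw [map_add] at huv'
  rcases Finset.mem_union.1 (Finsupp.support_add huv') with h1 | h1
  · have := repr_single_mul f c b hmul s v u h1
    have := hl v hv
    omega
  · rw [Module.Basis.repr_self, Finsupp.support_single_ne_zero _ one_ne_zero] at h1
    simp at h1
    subst h1
    have := hl v hv
    simp
    omega

end Aux

section Key
variable {S : Type*} [DecidableEq S] (f : S → S → Option S) (c : S → S)
  {R : Type*} [Ring R] (b : Module.Basis (List S) ℤ R)
  (hone : (b [] : R) = 1)
  (hmul : ∀ w w' : List S, (b w : R) * b w' =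
      ∑ n ∈ Finset.range (min w.length w'.length + 1),
        if w'.take n = wconj c (w.drop (w.length - n)) then
          (b (w.take (w.length - n) ++ w'.drop n) +
            ((wfuse f (w.take (w.length - n)) (w'.drop n)).elim 0 (fun u => (b u : R))))
        else 0)

include hone hmul

lemma key : ∀ w : List S,
    ∀ u ∈ (b.repr ((w.map fun s => (b [s] : R)).prod - b w)).support, u.length < w.length := by
  intro w
  induction w with
  | nil => simp [hone]
  | cons s w' ih =>
    intro u hu
    have hx : ((s :: w').map fun s => (b [s] : R)).prod - b (s :: w') =
        ((b [s] * b w' - b (s :: w')) +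
          b [s] * (((w'.map fun s => (b [s] : R)).prod - b w'))) := by
      simp only [List.map_cons, List.prod_cons, mul_sub]; abel
    rw [hx, map_add] at hu
    rcases Finset.mem_union.1 (Finsupp.support_add hu) with h1 | h1
    · have := repr_single_mul f c b hmul s w' u h1
      simp only [List.length_cons]; omega
    · set x := (w'.map fun s => (b [s] : R)).prod - b w' with hxdef
      have hr : x = Finsupp.linearCombination ℤ (⇑b) (b.repr x) :=
        (b.linearCombination_repr x).symm
      rw [hr] at h1
      have := mul_short f c b hmul s w'.length (b.repr x) ih u h1
      simp only [List.length_cons]; omega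

end Key

/-- In a free fusion ring over `S`, the monomial `a_{s₁} ⋯ a_{s_k}` equals
`a_{s₁…s_k}` plus a ℤ-linear combination of basis elements indexed by strictly
shorter words; consequently the monomials are ℤ-linearly independent. -/
theorem freeFusionRing_monomials {S : Type*} [DecidableEq S]
    (f : S → S → Option S) (c : S → S)
    (hassoc : ∀ s t r : S, (f s t).bind (fun x => f x r) = (f t r).bind (fun x => f s x))
    (hinv : ∀ s : S, c (c s) = s)
    (hcompat : ∀ s₁ s₂ s₃ : S, f s₁ s₂ = some (c s₃) ↔ f s₂ s₃ = some (c s₁))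
    {R : Type*} [Ring R] (b : Module.Basis (List S) ℤ R)
    (hone : (b [] : R) = 1)
    (hmul : ∀ w w' : List S, (b w : R) * b w' =
      ∑ n ∈ Finset.range (min w.length w'.length + 1),
        if w'.take n = wconj c (w.drop (w.length - n)) then
          (b (w.take (w.length - n) ++ w'.drop n) +
            ((wfuse f (w.take (w.length - n)) (w'.drop n)).elim 0 (fun u => (b u : R))))
        else 0) :
    (∀ w : List S, ∃ C : (List S) →₀ ℤ,
      (∀ v ∈ C.support, v.length < w.length) ∧
      ((w.map fun s => (b [s] : R)).prod = b w + C.sum fun v n => n • (b v : R))) ∧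
    LinearIndependent ℤ (fun w : List S => ((w.map fun s => (b [s] : R)).prod)) := by
  have part1 : ∀ w : List S, ∃ C : (List S) →₀ ℤ,
      (∀ v ∈ C.support, v.length < w.length) ∧
      ((w.map fun s => (b [s] : R)).prod = b w + C.sum fun v n => n • (b v : R)) := by
    intro w
    refine ⟨b.repr ((w.map fun s => (b [s] : R)).prod - b w), key f c b hone hmul w, ?_⟩
    have h1 : ((b.repr ((w.map fun s => (b [s] : R)).prod - b w)).sum fun v n => n • (b v : R))
        = (w.map fun s => (b [s] : R)).prod - b w := by
      rw [← Finsupp.linearCombination_apply, b.linearCombination_repr]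
    rw [h1]; abel
  refine ⟨part1, ?_⟩
  choose C hC hCeq using part1
  rw [linearIndependent_iff]
  intro l hl
  by_contra hne
  obtain ⟨w₀, hw₀, hmax⟩ := Finset.exists_max_image l.support (fun v => v.length)
    (Finsupp.support_nonempty_iff.2 hne)
  have h1 := congrArg (fun x => (b.repr x) w₀) hl
  simp only [map_zero, Finsupp.coe_zero, Pi.zero_apply] at h1
  rw [Finsupp.linearCombination_apply, Finsupp.sum, map_sum, Finset.sum_apply'] at h1
  have h2 : ∀ w ∈ l.support,
      (b.repr (l w • (w.map fun s => (b [s] : R)).prod)) w₀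
        = if w = w₀ then l w₀ else 0 := by
    intro w hw
    have hCw : (C w) w₀ = 0 := by
      by_contra h
      have h3 := hC w w₀ (Finsupp.mem_support_iff.2 h)
      have h4 := hmax w hw
      omega
    rw [hCeq w, ← Finsupp.linearCombination_apply, map_smul, map_add, Module.Basis.repr_self,
      Module.Basis.repr_linearCombination]
    simp only [Finsupp.smul_apply, Finsupp.add_apply, Finsupp.single_apply, hCw, add_zero]
    split
    · rename_i h; subst h; simp
    · simp
  rw [Finset.sum_congr rfl h2, Finset.sum_ite_eq' l.support w₀ (fun _ => l w₀)] at h1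
  rw [if_pos hw₀] at h1
  exact Finsupp.mem_support_iff.1 hw₀ h1
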